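/- Let d ≥ 2 be an integer and α > d − 2. Then U = (1/d, …, 1/d) is a local minimum of g on the open simplex: there exists ε > 0 such that g(u) ≥ 0 for every u ∈ Δ° with ‖u − U‖₁ < ε; moreover g(U) = 0. -/

import Mathlib

open Finset

/-- The function `g` of Lemma 4: `g(u) = 2 min u − d (min u)² − (∑ u_i^{−α})/(∑ u_i^{−(1+α)})`. -/
noncomputable def gfun (d : ℕ) (α : ℝ) (u : Fin d → ℝ) : ℝ :=
  2 * (⨅ i, u i) - d * (⨅ i, u i) ^ 2 -
    (∑ i, u i ^ (-α)) / (∑ i, u i ^ (-(1 + α)))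

/-- Lipschitz bound for `x ↦ x ^ q` on an interval of positive reals. -/
lemma lip_rpow_aux (q l r K : ℝ) (hl : 0 < l)
    (hK : ∀ x ∈ Set.Icc l r, |q * x ^ (q - 1)| ≤ K) :
    ∀ x ∈ Set.Icc l r, ∀ y ∈ Set.Icc l r, |y ^ q - x ^ q| ≤ K * |y - x| := by
  intro x hx y hy
  have h := Convex.norm_image_sub_le_of_norm_hasDerivWithin_le
    (f := fun z : ℝ => z ^ q) (f' := fun z : ℝ => q * z ^ (q - 1))
    (fun z hz => (Real.hasDerivAt_rpow_const
      (Or.inl (lt_of_lt_of_le hl hz.1).ne')).hasDerivWithinAt)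
    (fun z hz => by simpa only [Real.norm_eq_abs] using hK z hz)
    (convex_Icc l r) hx hy
  simpa [Real.norm_eq_abs] using h

/-- Quadratic Taylor-type bound for `x ↦ x ^ p` around `a`. -/
lemma quad_rpow_aux (p l r a C : ℝ) (hl : 0 < l) (ha : a ∈ Set.Icc l r) (hC : 0 ≤ C)
    (hlip : ∀ x ∈ Set.Icc l r, ∀ y ∈ Set.Icc l r,
      |y ^ (p - 1) - x ^ (p - 1)| ≤ C * |y - x|) :
    ∀ x ∈ Set.Icc l r,
      |x ^ p - a ^ p - p * a ^ (p - 1) * (x - a)| ≤ (|p| * C) * (x - a) ^ 2 := by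
  intro x hx
  have hsub : Set.uIcc a x ⊆ Set.Icc l r := Set.uIcc_subset_Icc ha hx
  have hmem : ∀ z ∈ Set.uIcc a x, |z - a| ≤ |x - a| := by
    intro z hz
    rcases le_total a x with h | h
    · rw [Set.uIcc_of_le h] at hz
      rw [abs_of_nonneg (by linarith [hz.1]), abs_of_nonneg (by linarith)]
      linarith [hz.2]
    · rw [Set.uIcc_of_ge h] at hz
      rw [abs_of_nonpos (by linarith [hz.2]), abs_of_nonpos (by linarith)]
      linarith [hz.1]
  have h := Convex.norm_image_sub_le_of_norm_hasDerivWithin_le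
    (f := fun z : ℝ => z ^ p - (p * a ^ (p - 1)) * z)
    (f' := fun z : ℝ => p * z ^ (p - 1) - p * a ^ (p - 1))
    (C := (|p| * C) * |x - a|) (s := Set.uIcc a x)
    (fun z hz => by
      have hz0 : z ≠ 0 := (lt_of_lt_of_le hl (hsub hz).1).ne'
      have hd := (Real.hasDerivAt_rpow_const (p := p) (Or.inl hz0)).sub
        ((hasDerivAt_id z).const_mul (p * a ^ (p - 1)))
      have h' := hd.hasDerivWithinAt (s := Set.uIcc a x)
      simp only [mul_one] at h'
      exact h')
    (fun z hz => by
      show |p * z ^ (p - 1) - p * a ^ (p - 1)| ≤ (|p| * C) * |x - a|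
      rw [
        show p * z ^ (p - 1) - p * a ^ (p - 1) = p * (z ^ (p - 1) - a ^ (p - 1)) by ring,
        abs_mul]
      have h1 : |z ^ (p - 1) - a ^ (p - 1)| ≤ C * |z - a| := hlip a ha z (hsub hz)
      calc |p| * |z ^ (p - 1) - a ^ (p - 1)| ≤ |p| * (C * |z - a|) :=
            mul_le_mul_of_nonneg_left h1 (abs_nonneg p)
        _ ≤ |p| * (C * |x - a|) := by
            have := hmem z hz
            gcongr
        _ = (|p| * C) * |x - a| := by ring)
    (convex_uIcc a x) Set.left_mem_uIcc Set.right_mem_uIcc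
  have h2 : |x ^ p - (p * a ^ (p - 1)) * x - (a ^ p - (p * a ^ (p - 1)) * a)|
      ≤ ((|p| * C) * |x - a|) * |x - a| := by
    simpa [Real.norm_eq_abs] using h
  calc |x ^ p - a ^ p - p * a ^ (p - 1) * (x - a)|
      = |x ^ p - (p * a ^ (p - 1)) * x - (a ^ p - (p * a ^ (p - 1)) * a)| := by ring_nf
    _ ≤ ((|p| * C) * |x - a|) * |x - a| := h2
    _ = (|p| * C) * (x - a) ^ 2 := by
        rw [mul_assoc, abs_mul_abs_self, ← sq]

/-- Cauchy–Schwarz consequence: if the coordinates sum to zero, each square is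
controlled by the total sum of squares. -/
lemma min_sq_aux (d : ℕ) (t : Fin d → ℝ) (ht : ∑ i, t i = 0) (i₀ : Fin d) :
    (d : ℝ) * (t i₀) ^ 2 ≤ ((d : ℝ) - 1) * ∑ i, (t i) ^ 2 := by
  have h1 : ∑ i ∈ univ.erase i₀, t i = - t i₀ := by
    rw [Finset.sum_erase_eq_sub (mem_univ i₀), ht]; ring
  have h2 : (∑ i ∈ univ.erase i₀, t i) ^ 2
      ≤ (#(univ.erase i₀) : ℝ) * ∑ i ∈ univ.erase i₀, (t i) ^ 2 := by
    have h := sq_sum_le_card_mul_sum_sq (s := univ.erase i₀) (f := t)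
    exact_mod_cast h
  have hd1 : 1 ≤ d := i₀.pos
  have hcard : ((#(univ.erase i₀) : ℕ) : ℝ) = (d : ℝ) - 1 := by
    rw [Finset.card_erase_of_mem (mem_univ i₀), Finset.card_univ, Fintype.card_fin]
    push_cast [Nat.cast_sub hd1]
    ring
  have h3 : ∑ i ∈ univ.erase i₀, (t i) ^ 2 = (∑ i, (t i) ^ 2) - (t i₀) ^ 2 :=
    Finset.sum_erase_eq_sub (mem_univ i₀)
  rw [h1, hcard, h3] at h2
  nlinarith [h2]

set_option maxHeartbeats 1000000 in
/-- Lemma 4: for `d ≥ 2` and `α > d − 2`, the uniform distribution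
`U = (1/d, …, 1/d)` is a local minimum of `g` on the open simplex, and `g(U) = 0`. -/
theorem stmt_12 (d : ℕ) (hd : 2 ≤ d) (α : ℝ) (hα : (d : ℝ) - 2 < α) :
    (∃ ε > 0, ∀ u : Fin d → ℝ, (∀ i, 0 < u i) → ∑ i, u i = 1 →
        ∑ i, |u i - 1 / d| < ε → 0 ≤ gfun d α u) ∧
      gfun d α (fun _ => 1 / d) = 0 := by
  haveI : NeZero d := ⟨by omega⟩
  have hdR : (2 : ℝ) ≤ (d : ℝ) := by exact_mod_cast hd
  have hd0 : (0 : ℝ) < (d : ℝ) := by linarith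
  have hα0 : (0 : ℝ) ≤ α := by linarith
  set a : ℝ := 1 / (d : ℝ) with ha_def
  have ha : 0 < a := by rw [ha_def]; positivity
  have hda : (d : ℝ) * a = 1 := by rw [ha_def]; field_simp
  set q : ℝ := -(1 + α) with hq_def
  set l : ℝ := 1 / (2 * (d : ℝ)) with hl_def
  set r : ℝ := 2 / (d : ℝ) with hr_def
  have hl : 0 < l := by rw [hl_def]; positivity
  have hal : l + l = a := by
    rw [hl_def, ha_def, div_add_div _ _ (by positivity) (by positivity),
      div_eq_div_iff (by positivity) (by positivity)]
    ring
  have har2 : a + l ≤ r := by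
    rw [hl_def, ha_def, hr_def]
    rw [div_add_div _ _ (by positivity) (by positivity),
      div_le_div_iff₀ (by positivity) (by positivity)]
    nlinarith
  have ha_mem : a ∈ Set.Icc l r := ⟨by linarith, by linarith⟩
  set K₁ : ℝ := |q - 1| * l ^ (q - 2) with hK₁_def
  have hK₁0 : 0 ≤ K₁ := by
    have := Real.rpow_pos_of_pos hl (q - 2)
    rw [hK₁_def]
    positivity
  have hlip : ∀ x ∈ Set.Icc l r, ∀ y ∈ Set.Icc l r,
      |y ^ (q - 1) - x ^ (q - 1)| ≤ K₁ * |y - x| := by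
    apply lip_rpow_aux _ _ _ _ hl
    intro x hx
    rw [abs_mul, hK₁_def]
    have hx0 : 0 < x := lt_of_lt_of_le hl hx.1
    have h1 : |x ^ (q - 1 - 1)| = x ^ (q - 1 - 1) := abs_of_pos (Real.rpow_pos_of_pos hx0 _)
    rw [h1]
    have h2 : x ^ (q - 1 - 1) ≤ l ^ (q - 2) := by
      rw [show q - 1 - 1 = q - 2 by ring]
      exact Real.rpow_le_rpow_of_nonpos hl hx.1 (by rw [hq_def]; linarith)
    exact mul_le_mul_of_nonneg_left h2 (abs_nonneg _)
  have hquad := quad_rpow_aux q l r a K₁ hl ha_mem hK₁0 hlip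
  set A : ℝ := a ^ q with hA_def
  set D : ℝ := q * a ^ (q - 1) with hD_def
  set C : ℝ := |q| * K₁ with hC_def
  have hC0 : 0 ≤ C := by rw [hC_def]; exact mul_nonneg (abs_nonneg _) hK₁0
  have hA : 0 < A := by rw [hA_def]; exact Real.rpow_pos_of_pos ha q
  have haq1 : 0 < a ^ (q - 1) := Real.rpow_pos_of_pos ha _
  set B : ℝ := a ^ (q - 1) * (α - ((d : ℝ) - 2)) with hB_def
  have hB : 0 < B := by rw [hB_def]; exact mul_pos haq1 (by linarith)
  refine ⟨⟨min l (B / (4 * C + 1)), lt_min hl (div_pos hB (by linarith)), ?_⟩, ?_⟩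
  · intro u hu hsum hδ
    set δ : ℝ := ∑ i, |u i - a| with hδ_def
    have hδ0 : 0 ≤ δ := by
      rw [hδ_def]; exact Finset.sum_nonneg fun i _ => abs_nonneg _
    have hδl : δ ≤ l := (lt_of_lt_of_le hδ (min_le_left _ _)).le
    have hδB : δ ≤ B / (4 * C + 1) := (lt_of_lt_of_le hδ (min_le_right _ _)).le
    have htabs : ∀ i, |u i - a| ≤ δ := by
      intro i
      rw [hδ_def]
      exact Finset.single_le_sum (fun j _ => abs_nonneg (u j - a)) (mem_univ i)
    have hsumt : ∑ i, (u i - a) = 0 := by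
      rw [Finset.sum_sub_distrib, hsum, Finset.sum_const, Finset.card_univ, Fintype.card_fin,
        nsmul_eq_mul]
      linarith
    have hmemu : ∀ i, u i ∈ Set.Icc l r := by
      intro i
      have h1 := abs_le.mp (htabs i)
      exact ⟨by linarith [h1.1], by linarith [h1.2]⟩
    obtain ⟨i₀, -, hi₀⟩ := Finset.exists_min_image univ u ⟨0, mem_univ 0⟩
    have hmin : ∀ i, u i₀ ≤ u i := fun i => hi₀ i (mem_univ i)
    have hiInf : (⨅ i, u i) = u i₀ :=
      le_antisymm (ciInf_le (Set.Finite.bddBelow (Set.finite_range u)) i₀)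
        (le_ciInf fun i => hmin i)
    set m : ℝ := u i₀ with hm_def
    have hm0 : 0 < m := by rw [hm_def]; exact hu i₀
    set s : ℝ := m - a with hs_def
    have hsabs : |s| ≤ δ := by rw [hs_def, hm_def]; exact htabs i₀
    have hdm : (d : ℝ) * m = 1 + (d : ℝ) * s := by rw [hs_def]; linear_combination hda
    set V : ℝ := -((d : ℝ) * s) with hV_def
    set Sig2 : ℝ := ∑ i, (u i - a) ^ 2 with hSig_def
    have hSig0 : 0 ≤ Sig2 := by
      rw [hSig_def]; exact Finset.sum_nonneg fun i _ => sq_nonneg _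
    have hsq : (d : ℝ) * s ^ 2 ≤ ((d : ℝ) - 1) * Sig2 := by
      rw [hs_def, hm_def, hSig_def]
      exact min_sq_aux d (fun i => u i - a) hsumt i₀
    have hrem : ∀ i, |u i ^ q - A - D * (u i - a)| ≤ C * (u i - a) ^ 2 :=
      fun i => hquad (u i) (hmemu i)
    have hxpos : ∀ i, 0 < u i ^ q := fun i => Real.rpow_pos_of_pos (hu i) q
    have hS : 0 < ∑ i, u i ^ q :=
      Finset.sum_pos (fun i _ => hxpos i) Finset.univ_nonempty
    unfold gfun
    rw [hiInf, ← hq_def]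
    rw [sub_nonneg, div_le_iff₀ hS]
    have hTeq : ∑ i, u i ^ (-α) = ∑ i, u i * u i ^ q := by
      apply Finset.sum_congr rfl
      intro i _
      rw [show -α = q + 1 by rw [hq_def]; ring, Real.rpow_add_one (hu i).ne']
      ring
    rw [hTeq]
    have hgoal : ∑ i, (u i - (2 * m - (d : ℝ) * m ^ 2)) * u i ^ q ≤ 0 →
        ∑ i, u i * u i ^ q ≤ (2 * m - (d : ℝ) * m ^ 2) * ∑ i, u i ^ q := by
      intro h
      have heq : ∑ i, (u i - (2 * m - (d : ℝ) * m ^ 2)) * u i ^ q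
          = ∑ i, u i * u i ^ q - (2 * m - (d : ℝ) * m ^ 2) * ∑ i, u i ^ q := by
        rw [Finset.mul_sum, ← Finset.sum_sub_distrib]
        apply Finset.sum_congr rfl
        intro i _
        ring
      rw [heq] at h
      linarith
    apply hgoal
    have hc : ∀ i, u i - (2 * m - (d : ℝ) * m ^ 2) = ((u i - a) - s) - m * V := by
      intro i
      linear_combination m * hdm + m * hV_def + hs_def
    have hE1 : ∑ i, (((u i - a) - s) - m * V) = V ^ 2 := by
      calc ∑ i, (((u i - a) - s) - m * V) = ∑ i, ((u i - a) - (s + m * V)) := by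
            apply Finset.sum_congr rfl; intro i _; ring
        _ = (∑ i, (u i - a)) - (d : ℝ) * (s + m * V) := by
            rw [Finset.sum_sub_distrib, Finset.sum_const, Finset.card_univ, Fintype.card_fin,
              nsmul_eq_mul]
        _ = V ^ 2 := by
            rw [hsumt, hV_def]
            linear_combination ((d : ℝ) * s) * hdm
    have hE2 : ∑ i, ((((u i - a) - s) - m * V) * (u i - a)) = Sig2 := by
      calc ∑ i, ((((u i - a) - s) - m * V) * (u i - a))
          = ∑ i, ((u i - a) ^ 2 - (s + m * V) * (u i - a)) := by
            apply Finset.sum_congr rfl; intro i _; ring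
        _ = Sig2 - (s + m * V) * ∑ i, (u i - a) := by
            rw [Finset.sum_sub_distrib, ← Finset.mul_sum, ← hSig_def]
        _ = Sig2 := by rw [hsumt, mul_zero, sub_zero]
    have hkey : ∑ i, (u i - (2 * m - (d : ℝ) * m ^ 2)) * u i ^ q
        = A * V ^ 2 + D * Sig2
          + ∑ i, ((((u i - a) - s) - m * V) * (u i ^ q - A - D * (u i - a))) := by
      have h1 : ∀ i, (u i - (2 * m - (d : ℝ) * m ^ 2)) * u i ^ q
          = A * (((u i - a) - s) - m * V)
            + D * ((((u i - a) - s) - m * V) * (u i - a))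
            + (((u i - a) - s) - m * V) * (u i ^ q - A - D * (u i - a)) := by
        intro i
        rw [hc i]
        ring
      rw [Finset.sum_congr rfl (fun i _ => h1 i), Finset.sum_add_distrib,
        Finset.sum_add_distrib, ← Finset.mul_sum, ← Finset.mul_sum, hE1, hE2]
    rw [hkey]
    have hb1 : A * V ^ 2 ≤ (A * ((d : ℝ) * ((d : ℝ) - 1))) * Sig2 := by
      have hV2 : V ^ 2 = (d : ℝ) * ((d : ℝ) * s ^ 2) := by rw [hV_def]; ring
      rw [hV2]
      calc A * ((d : ℝ) * ((d : ℝ) * s ^ 2)) ≤ A * ((d : ℝ) * (((d : ℝ) - 1) * Sig2)) := by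
            apply mul_le_mul_of_nonneg_left _ hA.le
            exact mul_le_mul_of_nonneg_left hsq hd0.le
        _ = (A * ((d : ℝ) * ((d : ℝ) - 1))) * Sig2 := by ring
    have hmV : |m * V| ≤ 2 * δ := by
      have hmle : m ≤ a + l := by
        have h2 := (abs_le.mp hsabs).2
        have h3 : m = a + s := by rw [hs_def]; ring
        linarith
      have hda3 : (d : ℝ) * (a + l) = 3 / 2 := by
        rw [ha_def, hl_def]; field_simp; ring
      have h3 : (d : ℝ) * |s| ≤ (d : ℝ) * δ := mul_le_mul_of_nonneg_left hsabs hd0.le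
      have h4 : m * ((d : ℝ) * |s|) ≤ (a + l) * ((d : ℝ) * δ) :=
        mul_le_mul hmle h3 (by positivity) (by linarith)
      have h5 : |m * V| = m * ((d : ℝ) * |s|) := by
        rw [hV_def, abs_mul, abs_neg, abs_mul, abs_of_pos hd0, abs_of_pos hm0]
      rw [h5]
      calc m * ((d : ℝ) * |s|) ≤ (a + l) * ((d : ℝ) * δ) := h4
        _ = ((d : ℝ) * (a + l)) * δ := by ring
        _ = (3 / 2) * δ := by rw [hda3]
        _ ≤ 2 * δ := by linarith
    have hcoef : ∀ i, |((u i - a) - s) - m * V| ≤ 4 * δ := by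
      intro i
      calc |((u i - a) - s) - m * V| ≤ |(u i - a) - s| + |m * V| := abs_sub _ _
        _ ≤ (|u i - a| + |s|) + |m * V| := by linarith [abs_sub (u i - a) s]
        _ ≤ δ + δ + 2 * δ := by linarith [htabs i, hsabs, hmV]
        _ = 4 * δ := by ring
    have hb3 : ∑ i, ((((u i - a) - s) - m * V) * (u i ^ q - A - D * (u i - a)))
        ≤ (4 * C * δ) * Sig2 := by
      have h1 : ∀ i ∈ univ, (((u i - a) - s) - m * V) * (u i ^ q - A - D * (u i - a))
          ≤ (4 * C * δ) * (u i - a) ^ 2 := by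
        intro i _
        calc (((u i - a) - s) - m * V) * (u i ^ q - A - D * (u i - a))
            ≤ |(((u i - a) - s) - m * V) * (u i ^ q - A - D * (u i - a))| := le_abs_self _
          _ = |((u i - a) - s) - m * V| * |u i ^ q - A - D * (u i - a)| := abs_mul _ _
          _ ≤ (4 * δ) * (C * (u i - a) ^ 2) :=
              mul_le_mul (hcoef i) (hrem i) (abs_nonneg _) (by linarith)
          _ = (4 * C * δ) * (u i - a) ^ 2 := by ring
      calc ∑ i, ((((u i - a) - s) - m * V) * (u i ^ q - A - D * (u i - a)))
          ≤ ∑ i, (4 * C * δ) * (u i - a) ^ 2 := Finset.sum_le_sum h1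
        _ = (4 * C * δ) * Sig2 := by rw [← Finset.mul_sum, ← hSig_def]
    have hcoef_neg : A * ((d : ℝ) * ((d : ℝ) - 1)) + D + 4 * C * δ ≤ 0 := by
      have hexp : a ^ (q - 1 + 1) = a ^ (q - 1) * a := Real.rpow_add_one ha.ne' (q - 1)
      have hAeq : A = a ^ (q - 1) * a := by
        rw [hA_def, ← hexp]
        congr 1
        ring
      have hmain : A * ((d : ℝ) * ((d : ℝ) - 1)) + D = -B := by
        rw [hAeq, hD_def, hB_def]
        linear_combination (a ^ (q - 1) * ((d : ℝ) - 1)) * hda + a ^ (q - 1) * hq_def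
      have h1 : δ * (4 * C + 1) ≤ B :=
        (le_div_iff₀ (by linarith : (0 : ℝ) < 4 * C + 1)).mp hδB
      have h2 : δ * (4 * C + 1) = 4 * C * δ + δ := by ring
      linarith
    calc A * V ^ 2 + D * Sig2
          + ∑ i, ((((u i - a) - s) - m * V) * (u i ^ q - A - D * (u i - a)))
        ≤ (A * ((d : ℝ) * ((d : ℝ) - 1))) * Sig2 + D * Sig2 + (4 * C * δ) * Sig2 := by
          linarith [hb1, hb3]
      _ = (A * ((d : ℝ) * ((d : ℝ) - 1)) + D + 4 * C * δ) * Sig2 := by ring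
      _ ≤ 0 := mul_nonpos_of_nonpos_of_nonneg hcoef_neg hSig0
  · simp only [gfun]
    rw [ciInf_const]
    rw [Finset.sum_const, Finset.sum_const, Finset.card_univ, Fintype.card_fin, nsmul_eq_mul, nsmul_eq_mul]
    have hrw : a ^ (-α) = a ^ (-(1 + α)) * a := by
      rw [show -α = -(1 + α) + 1 by ring, Real.rpow_add_one ha.ne']
    rw [hrw]
    have hne : a ^ (-(1 + α)) ≠ 0 := (Real.rpow_pos_of_pos ha _).ne'
    have hdiv : ((d : ℝ) * (a ^ (-(1 + α)) * a)) / ((d : ℝ) * a ^ (-(1 + α))) = a := by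
      field_simp
    rw [hdiv]
    linear_combination (-a) * hda
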